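/- Let 0 < q1 < q2 < q ≤ 2, α > 0, β > 0, γ > 0. Then the characteristic function Δ(s) = s^q + α·s^{q1} + β·s^{q2} + γ has no root s ∈ ℂ with Re(s) ≥ 0, where complex powers are taken with the principal branch. -/

import Mathlib

open Real Complex

lemma cpow_real_im (s : ℂ) (hs : s ≠ 0) (p : ℝ) :
    (s ^ (p : ℂ)).im = ‖s‖ ^ p * Real.sin (p * s.arg) := by
  rw [Complex.cpow_def_of_ne_zero hs, Complex.exp_im]
  simp [Complex.log_re, Complex.log_im, Real.exp_log, mul_comm,
    Real.rpow_def_of_pos (norm_pos_iff.mpr hs), Real.exp_mul, Real.exp_log]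

lemma cpow_real_re (s : ℂ) (hs : s ≠ 0) (p : ℝ) :
    (s ^ (p : ℂ)).re = ‖s‖ ^ p * Real.cos (p * s.arg) := by
  rw [Complex.cpow_def_of_ne_zero hs, Complex.exp_re]
  simp [Complex.log_re, Complex.log_im, Real.exp_log, mul_comm,
    Real.rpow_def_of_pos (norm_pos_iff.mpr hs), Real.exp_mul, Real.exp_log]

set_option maxHeartbeats 1000000 in
theorem stmt_11 (q q1 q2 α β γ : ℝ) (h1 : 0 < q1) (h2 : q1 < q2) (h3 : q2 < q) (h4 : q ≤ 2)
    (hα : 0 < α) (hβ : 0 < β) (hγ : 0 < γ) :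
    ∀ s : ℂ, 0 ≤ s.re →
      s ^ (q : ℂ) + (α : ℂ) * s ^ (q1 : ℂ) + (β : ℂ) * s ^ (q2 : ℂ) + (γ : ℂ) ≠ 0 := by
  intro s hre h
  by_cases hs : s = 0
  · subst hs
    rw [Complex.zero_cpow (by exact_mod_cast (by linarith : (0:ℝ) < q).ne'),
        Complex.zero_cpow (by exact_mod_cast h1.ne'),
        Complex.zero_cpow (by exact_mod_cast (h1.trans h2).ne')] at h
    simp at h
    exact hγ.ne' (by exact_mod_cast h)
  · have hr : 0 < ‖s‖ := norm_pos_iff.mpr hs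
    set r := ‖s‖
    set θ := s.arg with hθ
    have habs : |θ| ≤ π / 2 := Complex.abs_arg_le_pi_div_two_iff.mpr hre
    have hθle : θ ≤ π / 2 := (abs_le.mp habs).2
    have hθge : -(π / 2) ≤ θ := (abs_le.mp habs).1
    have hpi : 0 < π := Real.pi_pos
    rcases lt_trichotomy θ 0 with hneg | hzero | hpos
    · -- imaginary part is negative
      have him : (s ^ (q : ℂ) + (α : ℂ) * s ^ (q1 : ℂ) + (β : ℂ) * s ^ (q2 : ℂ) + (γ : ℂ)).im
          = r ^ q * Real.sin (q * θ) + α * (r ^ q1 * Real.sin (q1 * θ))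
            + β * (r ^ q2 * Real.sin (q2 * θ)) := by
        simp [Complex.add_im, Complex.mul_im, cpow_real_im s hs]
        rfl
      rw [h, Complex.zero_im] at him
      have hb1 : -π ≤ q * θ := by nlinarith
      have hb2 : -π < q1 * θ := by nlinarith
      have hb3 : -π ≤ q2 * θ := by nlinarith
      have h1' : Real.sin (q * θ) ≤ 0 :=
        Real.sin_nonpos_of_nonpos_of_neg_pi_le (by nlinarith) hb1
      have h2' : Real.sin (q1 * θ) < 0 :=
        Real.sin_neg_of_neg_of_neg_pi_lt (by nlinarith) hb2
      have h3' : Real.sin (q2 * θ) ≤ 0 :=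
        Real.sin_nonpos_of_nonpos_of_neg_pi_le (by nlinarith) hb3
      have p1 : (0:ℝ) < r ^ q := Real.rpow_pos_of_pos hr q
      have p2 : (0:ℝ) < r ^ q1 := Real.rpow_pos_of_pos hr q1
      have p3 : (0:ℝ) < r ^ q2 := Real.rpow_pos_of_pos hr q2
      have t1 : r ^ q * Real.sin (q * θ) ≤ 0 := mul_nonpos_of_nonneg_of_nonpos p1.le h1'
      have t2 : α * (r ^ q1 * Real.sin (q1 * θ)) < 0 :=
        mul_neg_of_pos_of_neg hα (mul_neg_of_pos_of_neg p2 h2')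
      have t3 : β * (r ^ q2 * Real.sin (q2 * θ)) ≤ 0 :=
        mul_nonpos_of_nonneg_of_nonpos hβ.le (mul_nonpos_of_nonneg_of_nonpos p3.le h3')
      linarith
    · -- real part is positive
      have hre' : (s ^ (q : ℂ) + (α : ℂ) * s ^ (q1 : ℂ) + (β : ℂ) * s ^ (q2 : ℂ) + (γ : ℂ)).re
          = r ^ q * Real.cos (q * θ) + α * (r ^ q1 * Real.cos (q1 * θ))
            + β * (r ^ q2 * Real.cos (q2 * θ)) + γ := by
        simp [Complex.add_re, Complex.mul_re, cpow_real_re s hs, cpow_real_im s hs]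
        rfl
      rw [h, Complex.zero_re] at hre'
      rw [hzero] at hre'
      simp at hre'
      have p1 : (0:ℝ) < r ^ q := Real.rpow_pos_of_pos hr q
      have p2 : (0:ℝ) < r ^ q1 := Real.rpow_pos_of_pos hr q1
      have p3 : (0:ℝ) < r ^ q2 := Real.rpow_pos_of_pos hr q2
      nlinarith [mul_pos hα p2, mul_pos hβ p3]
    · -- imaginary part is positive
      have him : (s ^ (q : ℂ) + (α : ℂ) * s ^ (q1 : ℂ) + (β : ℂ) * s ^ (q2 : ℂ) + (γ : ℂ)).im
          = r ^ q * Real.sin (q * θ) + α * (r ^ q1 * Real.sin (q1 * θ))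
            + β * (r ^ q2 * Real.sin (q2 * θ)) := by
        simp [Complex.add_im, Complex.mul_im, cpow_real_im s hs]
        rfl
      rw [h, Complex.zero_im] at him
      have hb1 : q * θ ≤ π := by nlinarith
      have hb2 : q1 * θ < π := by nlinarith
      have hb3 : q2 * θ ≤ π := by nlinarith
      have h1' : 0 ≤ Real.sin (q * θ) :=
        Real.sin_nonneg_of_nonneg_of_le_pi (by nlinarith) hb1
      have h2' : 0 < Real.sin (q1 * θ) :=
        Real.sin_pos_of_pos_of_lt_pi (by nlinarith) hb2
      have h3' : 0 ≤ Real.sin (q2 * θ) :=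
        Real.sin_nonneg_of_nonneg_of_le_pi (by nlinarith) hb3
      have p1 : (0:ℝ) < r ^ q := Real.rpow_pos_of_pos hr q
      have p2 : (0:ℝ) < r ^ q1 := Real.rpow_pos_of_pos hr q1
      have p3 : (0:ℝ) < r ^ q2 := Real.rpow_pos_of_pos hr q2
      have t1 : 0 ≤ r ^ q * Real.sin (q * θ) := mul_nonneg p1.le h1'
      have t2 : 0 < α * (r ^ q1 * Real.sin (q1 * θ)) := mul_pos hα (mul_pos p2 h2')
      have t3 : 0 ≤ β * (r ^ q2 * Real.sin (q2 * θ)) :=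
        mul_nonneg hβ.le (mul_nonneg p3.le h3')
      linarith
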